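/- Let H be a metric space that is also a topological group (with the metric topology) acting continuously on a Hausdorff topological space X. Fix h ∈ H and a real number a > 0 such that the closed ball of radius 2a centered at h is compact. Then the function x ↦ min(a, infDist(h, Stab(x))) from X to ℝ is lower semicontinuous, where Stab(x) = {k ∈ H : k • x = x} and infDist(h, S) denotes the infimum of distances from h to points of S. -/

import Mathlib

/-- If `H` is a metric group acting continuously on a Hausdorff space `X`, `h ∈ H`,
and `a > 0` is such that the closed ball of radius `2a` around `h` is compact, then
`x ↦ min a (infDist h (Stab x))` is lower semicontinuous. -/
theorem stmt_3 {H X : Type*} [MetricSpace H] [Group H] [IsTopologicalGroup H]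
    [TopologicalSpace X] [T2Space X] [MulAction H X] [ContinuousSMul H X]
    (h : H) (a : ℝ) (ha : 0 < a) (hball : IsCompact (Metric.closedBall h (2 * a))) :
    LowerSemicontinuous fun x : X => min a (Metric.infDist h {k : H | k • x = x}) := by
  intro x₀ c hc
  rcases lt_or_ge c 0 with hc0 | hc0
  · exact Filter.Eventually.of_forall fun x =>
      lt_of_lt_of_le hc0 (le_min ha.le Metric.infDist_nonneg)
  · obtain ⟨c', hcc', hc'⟩ := exists_between hc
    have hc'a : c' < a := lt_of_lt_of_le hc' (min_le_left _ _)
    have hc'inf : c' < Metric.infDist h {k : H | k • x₀ = x₀} :=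
      lt_of_lt_of_le hc' (min_le_right _ _)
    have hK : IsCompact (Metric.closedBall h c') :=
      hball.of_isClosed_subset Metric.isClosed_closedBall
        (Metric.closedBall_subset_closedBall (by linarith))
    have hopen : IsOpen {p : X × H | p.2 • p.1 ≠ p.1} := by
      have : {p : X × H | p.2 • p.1 ≠ p.1} =
          (fun p : X × H => (p.2 • p.1, p.1)) ⁻¹' (Set.diagonal X)ᶜ := by
        ext p; simp [Set.diagonal, eq_comm]
      rw [this]
      exact (isClosed_diagonal.isOpen_compl).preimage
        ((continuous_snd.smul continuous_fst).prodMk continuous_fst)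
    have key : ∀ᶠ x in nhds x₀, ∀ k ∈ Metric.closedBall h c', k • x ≠ x := by
      apply hK.eventually_forall_of_forall_eventually (P := fun x k => k • x ≠ x)
      intro k hk
      have hkx : k • x₀ ≠ x₀ := by
        intro hfix
        exact absurd (Metric.infDist_le_dist_of_mem (s := {k : H | k • x₀ = x₀}) hfix)
          (by rw [dist_comm]; exact lt_of_le_of_lt (Metric.mem_closedBall.mp hk) hc'inf |>.not_ge)
      exact hopen.mem_nhds hkx
    filter_upwards [key] with x hx
    refine lt_min (lt_trans hcc' hc'a) (lt_of_lt_of_le hcc' ?_)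
    refine le_of_not_gt fun hlt => ?_
    obtain ⟨y, hy, hdy⟩ := (Metric.infDist_lt_iff (s := {k : H | k • x = x}) (x := h) ⟨(1 : H), one_smul H x⟩).mp hlt
    exact hx y (Metric.mem_closedBall.mpr (by rw [dist_comm]; exact hdy.le)) hy
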